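/- arXiv:1501.04398 — 6 statements merged into one kernel-verified Lean document; each statement's English description precedes it below -/
import Mathlib

section
/- For every vertex u of a connected finite simple graph X, the eccentricity of u is at most the dual degree of u, i.e., ε_u ≤ d*(u) = |Φ_u| − 1. -/
open Matrix Finset Polynomial

variable {V : Type*}

/-- The eccentricity of a vertex: maximum graph distance to any vertex. -/
noncomputable def ecc [Fintype V] (X : SimpleGraph V) (u : V) : ℕ :=
  Finset.univ.sup fun w => X.dist u w

/-- The standard basis vector of a vertex. -/
def eVec [DecidableEq V] (u : V) : V → ℝ := Pi.single u 1

/-- `SpectralDecomp X d θ E` : `θ 0 > θ 1 > ... > θ d` are the distinct eigenvalues of the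
adjacency matrix of `X` and `E r` is the orthogonal projection onto the `θ r`-eigenspace. -/
structure SpectralDecomp [Fintype V] [DecidableEq V] (X : SimpleGraph V) [DecidableRel X.Adj]
    (d : ℕ) (θ : Fin (d + 1) → ℝ) (E : Fin (d + 1) → Matrix V V ℝ) : Prop where
  decomp : X.adjMatrix ℝ = ∑ r, θ r • E r
  sum_eq_one : ∑ r, E r = 1
  orth : ∀ r s, E r * E s = if r = s then E r else 0
  symm : ∀ r, (E r)ᵀ = E r
  strict_anti : ∀ r s : Fin (d + 1), r < s → θ s < θ r
  proj_ne_zero : ∀ r, E r ≠ 0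

open scoped Classical in
/-- The (index set of the) eigenvalue support of a vertex `u`:
those `r` with `E r * e_u ≠ 0`. -/
noncomputable def suppIdx [Fintype V] [DecidableEq V] {d : ℕ}
    (E : Fin (d + 1) → Matrix V V ℝ) (u : V) : Finset (Fin (d + 1)) :=
  Finset.univ.filter fun r => E r *ᵥ eVec u ≠ 0

/-- The dual degree `d*(u) = |Φ_u| - 1`. -/
noncomputable def dualDeg [Fintype V] [DecidableEq V] {d : ℕ}
    (E : Fin (d + 1) → Matrix V V ℝ) (u : V) : ℕ :=
  (suppIdx E u).card - 1

/-- A vertex is spectrally extremal if its eccentricity equals its dual degree. -/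
noncomputable def SpectrallyExtremal [Fintype V] [DecidableEq V] (X : SimpleGraph V) {d : ℕ}
    (E : Fin (d + 1) → Matrix V V ℝ) (u : V) : Prop :=
  ecc X u = dualDeg E u

/-- Vertices are cospectral if the diagonal entries of all spectral projections agree. -/
def Cospectral [Fintype V] [DecidableEq V] {d : ℕ}
    (E : Fin (d + 1) → Matrix V V ℝ) (u v : V) : Prop :=
  ∀ r, E r u u = E r v v

/-- Vertices are strongly cospectral if `E r e_u = ± E r e_v` for every `r`. -/
def StronglyCospectral [Fintype V] [DecidableEq V] {d : ℕ}
    (E : Fin (d + 1) → Matrix V V ℝ) (u v : V) : Prop :=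
  ∀ r, E r *ᵥ eVec v = E r *ᵥ eVec u ∨ E r *ᵥ eVec v = -(E r *ᵥ eVec u)

/-- `u` and `v` are antipodal vertices: they are cospectral, the distance partition of `u`
coincides with that of `v`, it is pseudo equitable (with respect to a positive Perron
eigenvector), and `{u}`, `{v}` are singleton classes at maximum distance from each other. -/
noncomputable def Antipodal [Fintype V] [DecidableEq V] (X : SimpleGraph V) [DecidableRel X.Adj]
    {d : ℕ} (θ : Fin (d + 1) → ℝ) (E : Fin (d + 1) → Matrix V V ℝ) (u v : V) : Prop :=
  Cospectral E u v ∧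
  -- the two distance partitions have the same classes
  (∀ i : ℕ, i ≤ ecc X u → ∃ j : ℕ, ∀ w, X.dist u w = i ↔ X.dist v w = j) ∧
  (∀ j : ℕ, j ≤ ecc X v → ∃ i : ℕ, ∀ w, X.dist u w = i ↔ X.dist v w = j) ∧
  -- `{u}` and `{v}` are singletons at maximum distance from each other
  X.dist u v = ecc X u ∧ X.dist u v = ecc X v ∧
  (∀ w, X.dist u w = X.dist u v → w = v) ∧
  (∀ w, X.dist v w = X.dist u v → w = u) ∧
  -- the partition is pseudo equitable with respect to a positive eigenvector
  -- for the largest eigenvalue `θ 0`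
  ∃ x : V → ℝ, (∀ w, 0 < x w) ∧ X.adjMatrix ℝ *ᵥ x = θ 0 • x ∧
    ∀ i : ℕ, ∀ w₁ w₂ : V, X.dist u w₁ = X.dist u w₂ →
      ∑ c ∈ Finset.univ.filter (fun c => X.dist u c = i),
          (X.adjMatrix ℝ) w₁ c * x c / x w₁
        = ∑ c ∈ Finset.univ.filter (fun c => X.dist u c = i),
          (X.adjMatrix ℝ) w₂ c * x c / x w₂

/-- Perfect state transfer from `u` to `v` at time `t`:
`|(exp (i t A))_{v,u}| = 1`. -/
noncomputable def PST [Fintype V] [DecidableEq V] (X : SimpleGraph V) [DecidableRel X.Adj]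
    (u v : V) (t : ℝ) : Prop :=
  ‖(NormedSpace.exp ((Complex.I * (t : ℂ)) • X.adjMatrix ℂ)) v u‖ = 1

/-- `X` is distance-regular: there are intersection numbers `a i`, `b i`, `c i` such that
any vertex `w` at distance `i` from `u` has exactly `c i` neighbours at distance `i - 1`
from `u`, `a i` neighbours at distance `i`, and `b i` neighbours at distance `i + 1`. -/
noncomputable def IsDistanceRegular [Fintype V] (X : SimpleGraph V) [DecidableRel X.Adj] :
    Prop :=
  ∃ a b c : ℕ → ℕ, ∀ (i : ℕ) (u w : V), X.dist u w = i →
    (Finset.univ.filter (fun z => X.Adj w z ∧ X.dist u z + 1 = i)).card = c i ∧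
    (Finset.univ.filter (fun z => X.Adj w z ∧ X.dist u z = i)).card = a i ∧
    (Finset.univ.filter (fun z => X.Adj w z ∧ X.dist u z = i + 1)).card = b i

variable [Fintype V] [DecidableEq V]

/-- For every vertex `u` of a connected finite simple graph,
the eccentricity of `u` is at most the dual degree of `u`: `ε_u ≤ |Φ_u| - 1`. -/
theorem stmt_0 (X : SimpleGraph V) [DecidableRel X.Adj] (hconn : X.Connected)
    {d : ℕ} (θ : Fin (d + 1) → ℝ) (E : Fin (d + 1) → Matrix V V ℝ)
    (hspec : SpectralDecomp X d θ E) (u : V) :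
    ecc X u ≤ (suppIdx E u).card - 1 := by
  classical
  set Φ := suppIdx E u with hΦ
  set m := Φ.card with hm
  -- powers of the adjacency matrix
  have hpow : ∀ j : ℕ, X.adjMatrix ℝ ^ j = ∑ r, θ r ^ j • E r := by
    intro j
    induction j with
    | zero => simpa using hspec.sum_eq_one.symm
    | succ j ih =>
      rw [pow_succ, ih, hspec.decomp, Finset.sum_mul_sum]
      refine Finset.sum_congr rfl fun r _ => ?_
      have hterm : ∀ s : Fin (d + 1), (θ r ^ j • E r) * (θ s • E s)
          = (θ r ^ j * θ s) • (if r = s then E r else 0) := fun s => by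
        rw [Matrix.smul_mul, Matrix.mul_smul, smul_smul, hspec.orth]
      simp_rw [hterm]
      simp [pow_succ]
  -- entries of powers in terms of the support
  have hEzero : ∀ r : Fin (d + 1), r ∉ Φ → ∀ w : V, E r w u = 0 := by
    intro r hr w
    have h0 : E r *ᵥ eVec u = 0 := by
      by_contra h
      exact hr (Finset.mem_filter.2 ⟨Finset.mem_univ r, h⟩)
    have := congrFun h0 w
    simpa [eVec, Matrix.mulVec_single] using this
  have hentry : ∀ (j : ℕ) (w : V),
      (X.adjMatrix ℝ ^ j) w u = ∑ r ∈ Φ, θ r ^ j * E r w u := by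
    intro j w
    rw [hpow j]
    have : (∑ r, θ r ^ j • E r) w u = ∑ r, θ r ^ j * E r w u := by
      simp [Matrix.sum_apply]
    rw [this]
    exact (Finset.sum_subset Φ.subset_univ (fun r _ hr => by
      rw [hEzero r hr w, mul_zero])).symm
  -- it suffices to bound each distance
  rw [ecc]
  refine Finset.sup_le fun w _ => ?_
  set k := X.dist u w with hk
  have hkm : k < m := by
    by_contra hmk
    push_neg at hmk
    -- walk counting facts
    have hwalkdist : X.dist w u = k := by rw [hk, SimpleGraph.dist_comm]
    have hf0 : ∀ j : ℕ, j < k → (X.adjMatrix ℝ ^ j) w u = 0 := by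
      intro j hj
      rw [SimpleGraph.adjMatrix_pow_apply_eq_card_walk]
      have : IsEmpty {p : X.Walk w u // p.length = j} := by
        constructor
        rintro ⟨p, hp⟩
        have := SimpleGraph.dist_le p
        omega
      simp [Fintype.card_eq_zero]
      exact Finset.eq_empty_of_forall_notMem fun p hp =>
        this.false ⟨p, SimpleGraph.mem_finsetWalkLength_iff.1 hp⟩
    have hfk : (X.adjMatrix ℝ ^ k) w u ≠ 0 := by
      rw [SimpleGraph.adjMatrix_pow_apply_eq_card_walk]
      obtain ⟨p, hp⟩ := hconn.exists_walk_length_eq_dist w u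
      have : Nonempty {p : X.Walk w u // p.length = k} := ⟨⟨p, by rw [hp, hwalkdist]⟩⟩
      have hcard : 0 < Fintype.card {p : X.Walk w u // p.length = k} :=
        Fintype.card_pos
      exact_mod_cast Nat.cast_ne_zero.2 hcard.ne'
    -- Vandermonde argument
    have hθinj : Function.Injective θ := by
      intro a b hab
      rcases lt_trichotomy a b with h | h | h
      · exact absurd hab (ne_of_gt (hspec.strict_anti a b h))
      · exact h
      · exact absurd hab (ne_of_lt (hspec.strict_anti b a h))
    let e : Fin m → {x // x ∈ Φ} := Φ.equivFin.symm
    let v : Fin m → ℝ := fun i => θ (e i)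
    let g : Fin m → ℝ := fun i => E (e i) w u
    have hsum : ∀ j : ℕ, ∑ i : Fin m, v i ^ j * g i = ∑ r ∈ Φ, θ r ^ j * E r w u := by
      intro j
      rw [← Finset.sum_coe_sort Φ (fun r => θ r ^ j * E r w u)]
      exact Fintype.sum_equiv Φ.equivFin.symm _ _ (fun i => rfl)
    have hvinj : Function.Injective v := fun a b hab => by
      have : e a = e b := Subtype.ext (hθinj hab)
      exact Φ.equivFin.symm.injective this
    have hdet : (Matrix.vandermonde v).det ≠ 0 :=
      Matrix.det_vandermonde_ne_zero_iff.2 hvinj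
    have hdetT : ((Matrix.vandermonde v)ᵀ).det ≠ 0 := by
      rwa [Matrix.det_transpose]
    have hunit : IsUnit ((Matrix.vandermonde v)ᵀ) :=
      (Matrix.isUnit_iff_isUnit_det _).2 (isUnit_iff_ne_zero.2 hdetT)
    have hinj := Matrix.mulVec_injective_iff_isUnit.2 hunit
    have hzero : (Matrix.vandermonde v)ᵀ *ᵥ g = 0 := by
      funext j
      have h1 : ((Matrix.vandermonde v)ᵀ *ᵥ g) j = ∑ i : Fin m, v i ^ (j : ℕ) * g i := by
        simp [Matrix.mulVec, dotProduct, Matrix.vandermonde]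
      rw [h1, hsum, ← hentry, hf0 (j : ℕ) (lt_of_lt_of_le j.isLt hmk)]
      rfl
    have hg0 : g = 0 := by
      have := hinj (a₁ := g) (a₂ := 0) (by rw [hzero, Matrix.mulVec_zero])
      exact this
    have : (X.adjMatrix ℝ ^ k) w u = 0 := by
      rw [hentry, ← hsum k]
      simp [hg0]
    exact hfk this
  exact Nat.le_pred_of_lt hkm
end

section
/- Let u be a spectrally extremal vertex of X and suppose u and v are strongly cospectral. Then v is the unique vertex of X at distance d(u,v) from u: if d(u,w) = d(u,v) for some vertex w, then w = v. -/
open Matrix Finset Polynomial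

variable {V : Type*}

section AuxStmt2

variable {V : Type*} [Fintype V] [DecidableEq V]

omit [DecidableEq V] in
lemma stmt2_sum_mulVec {ι : Type*} (s : Finset ι) (M : ι → Matrix V V ℝ) (x : V → ℝ) :
    (∑ r ∈ s, M r) *ᵥ x = ∑ r ∈ s, M r *ᵥ x := by
  ext w
  simp [Matrix.mulVec, dotProduct, Finset.sum_apply, Matrix.sum_apply,
    Finset.sum_mul]
  rw [Finset.sum_comm]

omit [Fintype V] [DecidableEq V] in
lemma stmt2_exists_dist_eq (X : SimpleGraph V) (u : V) :
    ∀ m : ℕ, (∃ w, X.dist u w = m) → ∀ k, k ≤ m → ∃ z, X.dist u z = k := by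
  intro m
  induction m with
  | zero =>
    rintro - k hk
    have : k = 0 := by omega
    exact ⟨u, by simp [this, SimpleGraph.dist_self]⟩
  | succ m ih =>
    rintro ⟨w, hw⟩ k hk
    rcases Nat.lt_succ_iff_lt_or_eq.mp (Nat.lt_succ_of_le hk) with h | h
    · have hne : X.dist u w ≠ 0 := by omega
      obtain ⟨p, hp⟩ := SimpleGraph.exists_walk_of_dist_ne_zero hne
      have hwu : w ≠ u := by
        intro h; subst h; rw [SimpleGraph.dist_self] at hw; omega
      obtain ⟨x, hadj, q, hq⟩ := SimpleGraph.Walk.exists_eq_cons_of_ne hwu p.reverse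
      have hql : q.length = m := by
        have := congrArg SimpleGraph.Walk.length hq
        simp [hp, hw] at this
        omega
      have h1 : X.dist u x ≤ m := by
        have := SimpleGraph.dist_le q.reverse
        simpa [hql] using this
      have h2 : m ≤ X.dist u x := by
        obtain ⟨r, hr⟩ := (SimpleGraph.Walk.reachable q.reverse).exists_walk_length_eq_dist
        have hle : X.dist u w ≤ r.length + 1 := by
          have := SimpleGraph.dist_le (r.concat hadj.symm)
          simpa [SimpleGraph.Walk.length_concat] using this
        omega
      exact ih ⟨x, by omega⟩ k (by omega)
    · exact ⟨w, by omega⟩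

lemma stmt2_pow_zero (X : SimpleGraph V) [DecidableRel X.Adj] (u : V)
    (j : ℕ) (z : V) (hj : j < X.dist u z) : (X.adjMatrix ℝ ^ j) z u = 0 := by
  rw [SimpleGraph.adjMatrix_pow_apply_eq_card_walk]
  norm_cast
  rw [Fintype.card_eq_zero_iff]
  refine ⟨fun p => ?_⟩
  have h1 : X.dist z u ≤ p.1.length := SimpleGraph.dist_le p.1
  have h2 : p.1.length = j := p.2
  rw [SimpleGraph.dist_comm] at h1
  omega

lemma stmt2_pow_pos (X : SimpleGraph V) [DecidableRel X.Adj] (hconn : X.Connected)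
    (u z : V) : 0 < (X.adjMatrix ℝ ^ (X.dist u z)) z u := by
  rw [SimpleGraph.adjMatrix_pow_apply_eq_card_walk]
  have : 0 < Fintype.card { p : X.Walk z u | p.length = X.dist u z } := by
    rw [Fintype.card_pos_iff]
    obtain ⟨p, hp⟩ := hconn.exists_walk_length_eq_dist z u
    exact ⟨⟨p, by simpa [SimpleGraph.dist_comm] using hp⟩⟩
  exact_mod_cast this

lemma stmt2_pow_decomp {X : SimpleGraph V} [DecidableRel X.Adj] {d : ℕ}
    {θ : Fin (d + 1) → ℝ} {E : Fin (d + 1) → Matrix V V ℝ}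
    (hspec : SpectralDecomp X d θ E) (k : ℕ) :
    X.adjMatrix ℝ ^ k = ∑ r, (θ r ^ k) • E r := by
  induction k with
  | zero => simpa using hspec.sum_eq_one.symm
  | succ k ih =>
    rw [pow_succ, ih, hspec.decomp, Finset.sum_mul_sum]
    rw [Finset.sum_congr rfl fun r _ => Finset.sum_congr rfl fun s _ => by
      rw [Matrix.smul_mul, Matrix.mul_smul, hspec.orth r s, smul_smul]]
    simp only [smul_ite, smul_zero]
    simp [Finset.sum_ite_eq, pow_succ]

end AuxStmt2

variable [Fintype V] [DecidableEq V]

set_option maxHeartbeats 1600000 in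
/-- If `u` is spectrally extremal and `u, v` are strongly cospectral,
then `v` is the unique vertex at distance `d(u,v)` from `u`. -/
theorem stmt_2 (X : SimpleGraph V) [DecidableRel X.Adj] (hconn : X.Connected)
    {d : ℕ} (θ : Fin (d + 1) → ℝ) (E : Fin (d + 1) → Matrix V V ℝ)
    (hspec : SpectralDecomp X d θ E) (u v : V)
    (hext : SpectrallyExtremal X E u) (hsc : StronglyCospectral E u v) :
    ∀ w : V, X.dist u w = X.dist u v → w = v := by
  classical
  intro w hw
  by_contra hne
  set n := ecc X u with hn
  have hsum_u : ∑ r, E r *ᵥ eVec u = eVec u := by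
    rw [← stmt2_sum_mulVec, hspec.sum_eq_one, Matrix.one_mulVec]
  have hΦne : (suppIdx E u).Nonempty := by
    by_contra h
    rw [Finset.not_nonempty_iff_eq_empty] at h
    have hall : ∀ r, E r *ᵥ eVec u = 0 := by
      intro r
      by_contra hr
      have : r ∈ suppIdx E u := by simp [suppIdx, hr]
      simp [h] at this
    have h1 : (eVec u : V → ℝ) u = 0 := by
      rw [← hsum_u]; simp [hall]
    simp [eVec] at h1
  have hcard : (suppIdx E u).card = n + 1 := by
    have h1 : 1 ≤ (suppIdx E u).card := Finset.card_pos.mpr hΦne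
    have h2 : ecc X u = (suppIdx E u).card - 1 := hext
    omega
  set σ : Fin (d + 1) → ℝ := fun r => if E r *ᵥ eVec v = E r *ᵥ eVec u then 1 else -1
    with hσdef
  have hσ : ∀ r, E r *ᵥ eVec v = σ r • (E r *ᵥ eVec u) := by
    intro r
    by_cases hcnd : E r *ᵥ eVec v = E r *ᵥ eVec u
    · simp [hσdef, hcnd]
    · rcases hsc r with h | h
      · exact absurd h hcnd
      · simp only [hσdef]
        rw [if_neg hcnd, h, neg_one_smul]
  set g := (suppIdx E u).orderIsoOfFin hcard with hg
  set τ : Fin (n + 1) → ℝ := fun i => θ (g i) with hτ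
  have hθinj : Function.Injective θ := by
    intro r s h
    rcases lt_trichotomy r s with hlt | he | hlt
    · exact absurd h.symm (ne_of_lt (hspec.strict_anti r s hlt))
    · exact he
    · exact absurd h (ne_of_lt (hspec.strict_anti s r hlt))
  have hτinj : Function.Injective τ := by
    intro i j h
    have h2 : (g i : Fin (d + 1)) = (g j : Fin (d + 1)) := hθinj h
    exact g.injective (Subtype.ext h2)
  have hdet : (Matrix.vandermonde τ).det ≠ 0 :=
    Matrix.det_vandermonde_ne_zero_iff.mpr hτinj
  set c : Fin (n + 1) → ℝ := (Matrix.vandermonde τ)⁻¹ *ᵥ (fun i => σ (g i)) with hcdef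
  have hVc : Matrix.vandermonde τ *ᵥ c = fun i => σ (g i) := by
    rw [hcdef, Matrix.mulVec_mulVec,
      Matrix.mul_nonsing_inv _ (isUnit_iff_ne_zero.mpr hdet), Matrix.one_mulVec]
  have hpoly : ∀ i : Fin (n + 1), (∑ j : Fin (n + 1), c j * τ i ^ (j : ℕ)) = σ (g i) := by
    intro i
    calc (∑ j : Fin (n + 1), c j * τ i ^ (j : ℕ))
        = ∑ j : Fin (n + 1), Matrix.vandermonde τ i j * c j := by
          refine Finset.sum_congr rfl fun j _ => ?_
          rw [Matrix.vandermonde_apply, mul_comm]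
      _ = (Matrix.vandermonde τ *ᵥ c) i := rfl
      _ = σ (g i) := congrFun hVc i
  have key : ∀ r, (∑ j : Fin (n + 1), c j * θ r ^ (j : ℕ)) • (E r *ᵥ eVec u)
      = E r *ᵥ eVec v := by
    intro r
    by_cases hr : r ∈ suppIdx E u
    · rw [hσ r]
      congr 1
      have h2 := hpoly (g.symm ⟨r, hr⟩)
      have hgi : ((g (g.symm ⟨r, hr⟩) : suppIdx E u) : Fin (d + 1)) = r := by simp
      simp only [hτ, hgi] at h2
      exact h2
    · have h0 : E r *ᵥ eVec u = 0 := by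
        by_contra h
        exact hr (by simp [suppIdx, h])
      rw [hσ r, h0]; simp
  have main : (∑ j : Fin (n + 1), c j • ((X.adjMatrix ℝ ^ (j : ℕ)) *ᵥ eVec u)) = eVec v := by
    calc (∑ j : Fin (n + 1), c j • ((X.adjMatrix ℝ ^ (j : ℕ)) *ᵥ eVec u))
        = ∑ j : Fin (n + 1), ∑ r, (c j * θ r ^ (j : ℕ)) • (E r *ᵥ eVec u) := by
          refine Finset.sum_congr rfl fun j _ => ?_
          rw [stmt2_pow_decomp hspec, stmt2_sum_mulVec, Finset.smul_sum]
          refine Finset.sum_congr rfl fun r _ => ?_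
          rw [Matrix.smul_mulVec, smul_smul]
      _ = ∑ r, ∑ j : Fin (n + 1), (c j * θ r ^ (j : ℕ)) • (E r *ᵥ eVec u) :=
          Finset.sum_comm
      _ = ∑ r, (∑ j : Fin (n + 1), c j * θ r ^ (j : ℕ)) • (E r *ᵥ eVec u) := by
          refine Finset.sum_congr rfl fun r _ => ?_
          rw [Finset.sum_smul]
      _ = ∑ r, E r *ᵥ eVec v := Finset.sum_congr rfl fun r _ => key r
      _ = eVec v := by rw [← stmt2_sum_mulVec, hspec.sum_eq_one, Matrix.one_mulVec]
  have hF : ∀ z : V, (∑ j : Fin (n + 1), c j * (X.adjMatrix ℝ ^ (j : ℕ)) z u) = eVec v z := by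
    intro z
    conv_rhs => rw [← main]
    rw [Finset.sum_apply]
    refine Finset.sum_congr rfl fun j _ => ?_
    rw [Pi.smul_apply, smul_eq_mul]
    congr 1
    simp [eVec]
  set δ := X.dist u v with hδ
  have hδn : δ ≤ n := by
    rw [hn]
    unfold ecc
    exact Finset.le_sup (f := fun z => X.dist u z) (Finset.mem_univ v)
  have htop : ∃ w0, X.dist u w0 = n := by
    obtain ⟨w0, -, hw0⟩ := Finset.exists_mem_eq_sup Finset.univ
      ⟨u, Finset.mem_univ u⟩ (fun z => X.dist u z)
    refine ⟨w0, ?_⟩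
    rw [hn]
    unfold ecc
    exact hw0.symm
  have step : ∀ j : Fin (n + 1), δ < (j : ℕ) →
      (∀ j' : Fin (n + 1), (j : ℕ) < (j' : ℕ) → c j' = 0) → c j = 0 := by
    intro j hδj hhigh
    obtain ⟨z, hz⟩ := stmt2_exists_dist_eq X u n htop (j : ℕ)
      (by have := j.isLt; omega)
    have hzv : z ≠ v := by
      intro h; subst h; omega
    have h0 : eVec v z = 0 := by simp [eVec, Pi.single_apply, hzv]
    have hs : (∑ j' : Fin (n + 1), c j' * (X.adjMatrix ℝ ^ (j' : ℕ)) z u)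
        = c j * (X.adjMatrix ℝ ^ (j : ℕ)) z u := by
      refine Finset.sum_eq_single j (fun j' _ hj' => ?_)
        (fun h => absurd (Finset.mem_univ j) h)
      rcases lt_or_gt_of_ne (fun h : (j' : ℕ) = (j : ℕ) => hj' (Fin.ext h)) with hlt | hgt
      · rw [stmt2_pow_zero X u (j' : ℕ) z (by omega), mul_zero]
      · rw [hhigh j' hgt, zero_mul]
    have hFz := hF z
    rw [hs, h0] at hFz
    have hpos := stmt2_pow_pos X hconn u z
    rw [hz] at hpos
    rcases mul_eq_zero.mp hFz with h | h
    · exact h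
    · exact absurd h (ne_of_gt hpos)
  have hzero : ∀ m : ℕ, ∀ j : Fin (n + 1), n - m ≤ (j : ℕ) → δ < (j : ℕ) → c j = 0 := by
    intro m
    induction m with
    | zero =>
      intro j hj hδj
      refine step j hδj fun j' hgt => absurd hgt (by have := j'.isLt; omega)
    | succ m ih =>
      intro j hj hδj
      exact step j hδj fun j' hgt => ih j' (by omega) (by omega)
  have hδfin : δ < n + 1 := by omega
  set jδ : Fin (n + 1) := ⟨δ, hδfin⟩ with hjδ
  have hjv : (jδ : ℕ) = δ := rfl
  have hsplit : ∀ z : V, X.dist u z = δ →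
      (∑ j : Fin (n + 1), c j * (X.adjMatrix ℝ ^ (j : ℕ)) z u)
        = c jδ * (X.adjMatrix ℝ ^ δ) z u := by
    intro z hz
    rw [← hjv]
    refine Finset.sum_eq_single jδ (fun j' _ hj' => ?_)
      (fun h => absurd (Finset.mem_univ _) h)
    have hne' : (j' : ℕ) ≠ δ := fun h => hj' (by rw [hjδ]; exact Fin.ext h)
    rcases lt_or_gt_of_ne hne' with hlt | hgt
    · rw [stmt2_pow_zero X u (j' : ℕ) z (by omega), mul_zero]
    · rw [hzero n j' (by omega) (by omega), zero_mul]
  have hcv : c jδ * (X.adjMatrix ℝ ^ δ) v u = 1 := by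
    have h2 := hF v
    rw [hsplit v rfl] at h2
    simpa [eVec] using h2
  have hcw : c jδ * (X.adjMatrix ℝ ^ δ) w u = 0 := by
    have h2 := hF w
    rw [hsplit w hw] at h2
    simpa [eVec, Pi.single_apply, hne] using h2
  have hposw := stmt2_pow_pos X hconn u w
  rw [hw] at hposw
  rcases mul_eq_zero.mp hcw with h | h
  · rw [h, zero_mul] at hcv; norm_num at hcv
  · exact absurd h (ne_of_gt hposw)
end

section
/- Let u be a spectrally extremal vertex of X, and suppose u and v are strongly cospectral, so that for each θ_r ∈ Φ_u there is a sign σ_r ∈ {+1,−1} with E_r e_v = σ_r E_r e_u. Let p(x) be the polynomial of minimum degree satisfying p(θ_r) = σ_r for all θ_r ∈ Φ_u. Then p(A) e_u = e_v and the degree of p equals d(u,v). -/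
open Matrix Finset Polynomial

variable {V : Type*}

variable [Fintype V] [DecidableEq V]


section Aux

variable [Fintype V] [DecidableEq V]

lemma sum_mulVec' {ι : Type*} (s : Finset ι) (M : ι → Matrix V V ℝ) (x : V → ℝ) :
    (∑ i ∈ s, M i) *ᵥ x = ∑ i ∈ s, M i *ᵥ x := by
  ext w
  simp only [Matrix.mulVec, dotProduct, Finset.sum_apply, Matrix.sum_apply,
    Finset.sum_mul]
  rw [Finset.sum_comm]

lemma walk_split' {X : SimpleGraph V} {u w : V} (p : X.Walk u w) (k : ℕ) (hk : k ≤ p.length) :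
    ∃ (z : V) (q1 : X.Walk u z) (q2 : X.Walk z w),
      q1.length = k ∧ q2.length = p.length - k := by
  induction p generalizing k with
  | nil =>
    obtain rfl : k = 0 := Nat.le_zero.mp hk
    exact ⟨_, SimpleGraph.Walk.nil, SimpleGraph.Walk.nil, rfl, rfl⟩
  | @cons a b c h q ih =>
    cases k with
    | zero => exact ⟨a, SimpleGraph.Walk.nil, SimpleGraph.Walk.cons h q, rfl, rfl⟩
    | succ k =>
      obtain ⟨z, q1, q2, h1, h2⟩ := ih k (by simpa using hk)
      exact ⟨z, SimpleGraph.Walk.cons h q1, q2, by simp [h1], by simpa using h2⟩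

lemma exists_dist_eq' {X : SimpleGraph V} (hconn : X.Connected) (u w : V) {k : ℕ}
    (hk : k ≤ X.dist u w) : ∃ z, X.dist u z = k := by
  obtain ⟨p, hp⟩ := hconn.exists_walk_length_eq_dist u w
  obtain ⟨z, q1, q2, h1, h2⟩ := walk_split' p k (by omega)
  refine ⟨z, le_antisymm (h1 ▸ X.dist_le q1) ?_⟩
  have t1 := hconn.dist_triangle (u := u) (v := z) (w := w)
  have t2 := X.dist_le q2
  omega

lemma pow_entry_zero' {X : SimpleGraph V} [DecidableRel X.Adj] {w u : V} {j : ℕ}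
    (h : j < X.dist w u) : (X.adjMatrix ℝ ^ j) w u = 0 := by
  rw [SimpleGraph.adjMatrix_pow_apply_eq_card_walk]
  haveI : IsEmpty { p : X.Walk w u // p.length = j } := by
    constructor
    rintro ⟨p, hp⟩
    have := X.dist_le p
    omega
  have hc : Fintype.card ↑{p : X.Walk w u | p.length = j} = 0 := by
    apply Fintype.card_eq_zero_iff.mpr
    exact this
  rw [hc]
  norm_num

lemma pow_entry_pos' {X : SimpleGraph V} [DecidableRel X.Adj] {w u : V}
    (hr : X.Reachable w u) : 0 < (X.adjMatrix ℝ ^ (X.dist w u)) w u := by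
  rw [SimpleGraph.adjMatrix_pow_apply_eq_card_walk]
  have : Nonempty { p : X.Walk w u | p.length = X.dist w u } := by
    obtain ⟨p, hp⟩ := hr.exists_walk_length_eq_dist
    exact ⟨⟨p, hp⟩⟩
  exact_mod_cast Fintype.card_pos

variable {X : SimpleGraph V} [DecidableRel X.Adj] {d : ℕ} {θ : Fin (d + 1) → ℝ}
  {E : Fin (d + 1) → Matrix V V ℝ}

lemma adj_mul_E' (h : SpectralDecomp X d θ E) (s : Fin (d + 1)) :
    X.adjMatrix ℝ * E s = θ s • E s := by
  rw [h.decomp, Finset.sum_mul]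
  rw [Finset.sum_eq_single s]
  · rw [smul_mul_assoc, h.orth, if_pos rfl]
  · intro r _ hr
    rw [smul_mul_assoc, h.orth, if_neg hr, smul_zero]
  · simp

lemma pow_mul_E' (h : SpectralDecomp X d θ E) (n : ℕ) (s : Fin (d + 1)) :
    X.adjMatrix ℝ ^ n * E s = θ s ^ n • E s := by
  induction n with
  | zero => simp
  | succ n ih =>
    rw [pow_succ, mul_assoc, adj_mul_E' h, Matrix.mul_smul, ih, smul_smul, pow_succ,
      mul_comm]

lemma aeval_mul_E' (h : SpectralDecomp X d θ E) (p : Polynomial ℝ) (s : Fin (d + 1)) :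
    (aeval (X.adjMatrix ℝ) p) * E s = p.eval (θ s) • E s := by
  induction p using Polynomial.induction_on' with
  | add p q hp hq => rw [map_add, add_mul, hp, hq, eval_add, add_smul]
  | monomial n a =>
    rw [aeval_monomial, mul_assoc, pow_mul_E' h, ← Algebra.smul_def, smul_smul,
      eval_monomial]

lemma aeval_eq_sum' (h : SpectralDecomp X d θ E) (p : Polynomial ℝ) :
    (aeval (X.adjMatrix ℝ) p) = ∑ s, p.eval (θ s) • E s := by
  conv_lhs => rw [← mul_one (aeval (X.adjMatrix ℝ) p), ← h.sum_eq_one, Finset.mul_sum]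
  exact Finset.sum_congr rfl fun s _ => aeval_mul_E' h p s

lemma aeval_mulVec_apply' (A : Matrix V V ℝ) (p : Polynomial ℝ) (u w : V) :
    (aeval A p *ᵥ eVec u) w = ∑ j ∈ Finset.range (p.natDegree + 1), p.coeff j * (A ^ j) w u := by
  have h1 : aeval A p = ∑ j ∈ Finset.range (p.natDegree + 1), p.coeff j • A ^ j := by
    conv_lhs => rw [p.as_sum_range]
    rw [map_sum]
    exact Finset.sum_congr rfl fun j _ => by rw [aeval_monomial, ← Algebra.smul_def]
  rw [h1, sum_mulVec']
  simp [eVec, Finset.sum_apply, Matrix.smul_mulVec]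

end Aux

/-- If `u` is spectrally extremal, `u, v` are strongly cospectral with
signs `σ_r`, and `p` is the minimum-degree polynomial with `p(θ_r) = σ_r` on `Φ_u`,
then `p(A) e_u = e_v` and `deg p = d(u,v)`. -/
theorem stmt_4 (X : SimpleGraph V) [DecidableRel X.Adj] (hconn : X.Connected)
    {d : ℕ} (θ : Fin (d + 1) → ℝ) (E : Fin (d + 1) → Matrix V V ℝ)
    (hspec : SpectralDecomp X d θ E) (u v : V)
    (hext : SpectrallyExtremal X E u)
    (σ : Fin (d + 1) → ℝ) (hσval : ∀ r, σ r = 1 ∨ σ r = -1)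
    (hσ : ∀ r, E r *ᵥ eVec v = σ r • (E r *ᵥ eVec u))
    (p : Polynomial ℝ)
    (hp : ∀ r ∈ suppIdx E u, p.eval (θ r) = σ r)
    (hmin : ∀ q : Polynomial ℝ, (∀ r ∈ suppIdx E u, q.eval (θ r) = σ r) →
      p.degree ≤ q.degree) :
    (aeval (X.adjMatrix ℝ) p) *ᵥ eVec u = eVec v ∧ p.natDegree = X.dist u v := by
  classical
  set A := X.adjMatrix ℝ with hA
  set S := suppIdx E u with hS
  have hmemS : ∀ s, s ∈ S ↔ E s *ᵥ eVec u ≠ 0 := by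
    intro s
    simp [hS, suppIdx]
  have hEu0 : ∀ s, s ∉ S → E s *ᵥ eVec u = 0 := by
    intro s hs
    by_contra h
    exact hs ((hmemS s).mpr h)
  -- Part 1 : p(A) e_u = e_v
  have part1 : (aeval A p) *ᵥ eVec u = eVec v := by
    rw [aeval_eq_sum' hspec p, sum_mulVec']
    have : ∀ s : Fin (d + 1), (p.eval (θ s) • E s) *ᵥ eVec u = E s *ᵥ eVec v := by
      intro s
      by_cases hs : s ∈ S
      · rw [Matrix.smul_mulVec, hp s hs, hσ s]
      · rw [Matrix.smul_mulVec, hEu0 s hs, hσ s, hEu0 s hs, smul_zero, smul_zero]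
    rw [Finset.sum_congr rfl fun s _ => this s, ← sum_mulVec', hspec.sum_eq_one,
      Matrix.one_mulVec]
  -- support is nonempty
  have hSne : S.Nonempty := by
    by_contra h
    rw [Finset.not_nonempty_iff_eq_empty] at h
    have h0 : eVec u = 0 := by
      have : (1 : Matrix V V ℝ) *ᵥ eVec u = eVec u := Matrix.one_mulVec _
      rw [← hspec.sum_eq_one, sum_mulVec'] at this
      rw [← this]
      apply Finset.sum_eq_zero
      intro s _
      apply hEu0
      simp [h]
    have : (eVec u : V → ℝ) u = 1 := by simp [eVec]
    rw [h0] at this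
    simp at this
  have hcard : S.card = ecc X u + 1 := by
    have h1 : ecc X u = (suppIdx E u).card - 1 := hext
    rw [← hS] at h1
    have h2 : 1 ≤ S.card := Finset.card_pos.mpr hSne
    omega
  -- p is nonzero
  obtain ⟨s₀, hs₀⟩ := hSne
  have hp0 : p ≠ 0 := by
    intro h
    have h1 := hp s₀ hs₀
    rw [h] at h1
    simp only [eval_zero] at h1
    rcases hσval s₀ with h2 | h2 <;> rw [h2] at h1 <;> norm_num at h1
  -- θ is injective on S
  have hθinj : Set.InjOn θ (S : Set (Fin (d + 1))) := by
    intro r _ t _ h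
    by_contra hne
    rcases lt_trichotomy r t with h1 | h1 | h1
    · have := hspec.strict_anti r t h1; linarith
    · exact hne h1
    · have := hspec.strict_anti t r h1; linarith
  -- degree bound via Lagrange interpolation
  have hdeg_le : p.natDegree ≤ ecc X u := by
    have hq : ∀ r ∈ S, (Lagrange.interpolate S θ σ).eval (θ r) = σ r := fun r hr =>
      Lagrange.eval_interpolate_at_node σ hθinj hr
    have h1 : p.degree ≤ (Lagrange.interpolate S θ σ).degree := hmin _ hq
    have h2 : (Lagrange.interpolate S θ σ).degree < (S.card : WithBot ℕ) :=
      Lagrange.degree_interpolate_lt σ hθinj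
    have h3 : p.degree < ((ecc X u + 1 : ℕ) : WithBot ℕ) := by
      rw [← hcard]
      exact lt_of_le_of_lt h1 h2
    have h4 : p.natDegree < ecc X u + 1 := (Polynomial.natDegree_lt_iff_degree_lt hp0).mpr h3
    omega
  -- d(u,v) ≤ deg p
  have hle1 : X.dist u v ≤ p.natDegree := by
    by_contra h
    push_neg at h
    have h1 : (aeval A p *ᵥ eVec u) v = 1 := by
      rw [part1]
      simp [eVec]
    rw [aeval_mulVec_apply'] at h1
    rw [Finset.sum_eq_zero] at h1
    · norm_num at h1
    · intro j hj
      rw [Finset.mem_range] at hj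
      have : j < X.dist v u := by rw [SimpleGraph.dist_comm]; omega
      rw [pow_entry_zero' this, mul_zero]
  -- deg p ≤ d(u,v)
  have hle2 : p.natDegree ≤ X.dist u v := by
    by_contra h
    push_neg at h
    haveI : Nonempty V := hconn.nonempty
    obtain ⟨w0, _, hw0⟩ := Finset.exists_mem_eq_sup Finset.univ Finset.univ_nonempty
      (fun w => X.dist u w)
    have hk : p.natDegree ≤ X.dist u w0 := by
      have : ecc X u = X.dist u w0 := hw0
      omega
    obtain ⟨w, hw⟩ := exists_dist_eq' hconn u w0 hk
    have hwv : w ≠ v := by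
      intro he
      rw [he] at hw
      omega
    have h1 : (aeval A p *ᵥ eVec u) w = 0 := by
      rw [part1]
      simp [eVec, Pi.single_eq_of_ne hwv]
    rw [aeval_mulVec_apply', Finset.sum_range_succ, Finset.sum_eq_zero] at h1
    · rw [zero_add] at h1
      have hdw : X.dist w u = p.natDegree := by rw [SimpleGraph.dist_comm]; exact hw
      have hpos : 0 < (A ^ p.natDegree) w u := by
        rw [← hdw]
        exact pow_entry_pos' (hconn w u)
      have hc : p.coeff p.natDegree ≠ 0 := by
        rw [← Polynomial.leadingCoeff]
        exact Polynomial.leadingCoeff_ne_zero.mpr hp0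
      exact hc (by
        have := mul_eq_zero.mp h1
        rcases this with h2 | h2
        · exact h2
        · exact absurd h2 (ne_of_gt hpos))
    · intro j hj
      rw [Finset.mem_range] at hj
      have : j < X.dist w u := by rw [SimpleGraph.dist_comm]; omega
      rw [pow_entry_zero' this, mul_zero]
  exact ⟨part1, le_antisymm hle2 hle1⟩
end

section
/- Let u be a spectrally extremal vertex of X and suppose u and v are strongly cospectral with u ≠ v. If d(u,v) < ε_u, then v is a cut-vertex of X, i.e., deleting v disconnects X. -/
open Matrix Finset Polynomial

variable {V : Type*}

lemma myDistAdjSucc {X : SimpleGraph V} (hconn : X.Connected) {u a c : V}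
    (h : X.Adj a c) : X.dist u c ≤ X.dist u a + 1 := by
  obtain ⟨P, hP⟩ := (hconn u a).exists_walk_length_eq_dist
  calc X.dist u c ≤ (P.concat h).length := SimpleGraph.dist_le _
  _ = X.dist u a + 1 := by rw [SimpleGraph.Walk.length_concat, hP]

lemma myWalkIVT {X : SimpleGraph V} (hconn : X.Connected) (u : V) (k : ℕ)
    {a b : V} (W : X.Walk a b) : X.dist u a ≤ k → k ≤ X.dist u b →
      ∃ z ∈ W.support, X.dist u z = k := by
  induction W with
  | nil => exact fun h1 h2 => ⟨_, by simp, le_antisymm h1 h2⟩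
  | @cons a c b h W ih =>
    intro h1 h2
    by_cases hc : X.dist u c ≤ k
    · obtain ⟨z, hz1, hz2⟩ := ih hc h2
      exact ⟨z, by simp [hz1], hz2⟩
    · refine ⟨a, by simp, le_antisymm h1 ?_⟩
      have := myDistAdjSucc hconn h (u := u)
      omega

lemma mySumMulVec [Fintype V] {ι : Type*} (s : Finset ι) (M : ι → Matrix V V ℝ) (x : V → ℝ) :
    (∑ i ∈ s, M i) *ᵥ x = ∑ i ∈ s, M i *ᵥ x := by
  induction s using Finset.cons_induction with
  | empty => simp [Matrix.zero_mulVec]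
  | cons a s ha ih => rw [Finset.sum_cons, Finset.sum_cons, Matrix.add_mulVec, ih]

variable [Fintype V] [DecidableEq V]

/-- If `u` is spectrally extremal, `u ≠ v` are strongly cospectral and
`d(u,v) < ε_u`, then `v` is a cut-vertex: deleting `v` disconnects `X`. -/
theorem stmt_8 (X : SimpleGraph V) [DecidableRel X.Adj] (hconn : X.Connected)
    {d : ℕ} (θ : Fin (d + 1) → ℝ) (E : Fin (d + 1) → Matrix V V ℝ)
    (hspec : SpectralDecomp X d θ E) (u v : V)
    (hext : SpectrallyExtremal X E u) (hsc : StronglyCospectral E u v)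
    (hne : u ≠ v) (hdist : X.dist u v < ecc X u) :
    ¬ (X.induce {w : V | w ≠ v}).Connected := by
  classical
  intro hcon
  haveI : Nonempty V := hconn.nonempty
  set A := X.adjMatrix ℝ with hAdef
  set ε := ecc X u with hε
  set k := X.dist u v with hk
  set Φ := suppIdx E u with hΦ
  -- matrix power formula
  have Apow : ∀ j : ℕ, A ^ j = ∑ r, θ r ^ j • E r := by
    intro j
    induction j with
    | zero => simpa using hspec.sum_eq_one.symm
    | succ j ih =>
      have horth : ∀ r s : Fin (d+1), (θ r ^ j • E r) * (θ s • E s) =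
          if r = s then θ r ^ (j+1) • E r else 0 := by
        intro r s
        rw [Matrix.smul_mul, Matrix.mul_smul, hspec.orth, smul_ite, smul_ite,
          smul_zero, smul_zero, smul_smul]
        by_cases h : r = s
        · subst h; simp [pow_succ, mul_comm]
        · simp [h]
      rw [pow_succ, ih, hAdef, hspec.decomp, Finset.sum_mul_sum]
      simp_rw [horth]
      simp
  have hA : ∀ j : ℕ, A ^ j *ᵥ eVec u = ∑ r, θ r ^ j • (E r *ᵥ eVec u) := by
    intro j
    rw [Apow j, mySumMulVec]
    exact Finset.sum_congr rfl fun r _ => Matrix.smul_mulVec _ _ _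
  -- signs
  have hσ' : ∀ r, ∃ s : ℝ, E r *ᵥ eVec v = s • (E r *ᵥ eVec u) := by
    intro r
    rcases hsc r with h | h
    · exact ⟨1, by simp [h]⟩
    · exact ⟨-1, by simp [h]⟩
  choose σ hσ using hσ'
  -- support facts
  have hsupp0 : ∀ r, r ∉ Φ → E r *ᵥ eVec u = 0 := by
    intro r hr
    by_contra h
    exact hr (by simp [hΦ, suppIdx, h])
  have hsuppv0 : ∀ r, r ∉ Φ → E r *ᵥ eVec v = 0 := by
    intro r hr
    rw [hσ r, hsupp0 r hr, smul_zero]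
  -- total sums
  have hsum_u : ∑ r, E r *ᵥ eVec u = eVec u := by
    rw [← mySumMulVec, hspec.sum_eq_one, Matrix.one_mulVec]
  have hsum_v : ∑ r, E r *ᵥ eVec v = eVec v := by
    rw [← mySumMulVec, hspec.sum_eq_one, Matrix.one_mulVec]
  -- cardinality
  have hΦne : Φ.Nonempty := by
    by_contra h
    rw [Finset.not_nonempty_iff_eq_empty] at h
    have : eVec u = 0 := by
      rw [← hsum_u]
      exact Finset.sum_eq_zero fun r _ => hsupp0 r (by simp [h])
    have := congrFun this u
    simp [eVec] at this
  have hcard : Φ.card = ε + 1 := by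
    have h1 : ε = Φ.card - 1 := hext
    have h2 : 0 < Φ.card := Finset.card_pos.mpr hΦne
    omega
  -- injectivity of θ
  have hθinj : Set.InjOn θ ↑Φ := by
    intro r _ s _ hrs
    by_contra hne'
    rcases lt_or_gt_of_ne hne' with h | h
    · exact (hspec.strict_anti r s h).ne' hrs
    · exact (hspec.strict_anti s r h).ne hrs
  -- interpolating polynomial
  set p := Lagrange.interpolate Φ θ σ with hp
  have hdeg : p.natDegree < ε + 1 := by
    rcases eq_or_ne p 0 with h | h
    · rw [h]; simp
    · rw [Polynomial.natDegree_lt_iff_degree_lt h]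
      have := Lagrange.degree_interpolate_lt (r := σ) hθinj
      rw [hcard] at this
      exact_mod_cast this
  have heval : ∀ r ∈ Φ, p.eval (θ r) = σ r := fun r hr =>
    Lagrange.eval_interpolate_at_node σ hθinj hr
  -- main identity
  have main : eVec v = ∑ j ∈ Finset.range (ε + 1), p.coeff j • (A ^ j *ᵥ eVec u) := by
    calc eVec v = ∑ r, E r *ᵥ eVec v := hsum_v.symm
      _ = ∑ r, p.eval (θ r) • (E r *ᵥ eVec u) := by
          refine Finset.sum_congr rfl fun r _ => ?_
          by_cases hr : r ∈ Φ
          · rw [hσ r, heval r hr]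
          · rw [hsuppv0 r hr, hsupp0 r hr, smul_zero]
      _ = ∑ r, (∑ j ∈ Finset.range (ε + 1), p.coeff j * θ r ^ j) • (E r *ᵥ eVec u) := by
          refine Finset.sum_congr rfl fun r _ => ?_
          rw [Polynomial.eval_eq_sum_range' hdeg]
      _ = ∑ j ∈ Finset.range (ε + 1), p.coeff j • (A ^ j *ᵥ eVec u) := by
          simp_rw [hA, Finset.smul_sum, Finset.sum_smul, smul_smul]
          rw [Finset.sum_comm]
  -- entrywise identity
  have entry : ∀ w : V, eVec v w = ∑ j ∈ Finset.range (ε + 1), p.coeff j * (A ^ j) w u := by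
    intro w
    rw [main, Finset.sum_apply]
    refine Finset.sum_congr rfl fun j _ => ?_
    simp [eVec, Matrix.mulVec_single]
  -- entry facts
  have hzero : ∀ (j : ℕ) (w : V), j < X.dist u w → (A ^ j) w u = 0 := by
    intro j w hj
    rw [hAdef, SimpleGraph.adjMatrix_pow_apply_eq_card_walk]
    rw [show ((Fintype.card {p : X.Walk w u | p.length = j} : ℕ) : ℝ) = 0 ↔ _ from Nat.cast_eq_zero, Fintype.card_eq_zero_iff]
    constructor
    rintro ⟨q, hq⟩
    have h1 : X.dist w u ≤ q.length := SimpleGraph.dist_le q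
    have h2 : X.dist u w = X.dist w u := SimpleGraph.dist_comm ..
    rw [Set.mem_setOf_eq] at hq
    omega
  have hpos : ∀ (j : ℕ) (w : V), X.dist u w = j → 0 < (A ^ j) w u := by
    intro j w hj
    rw [hAdef, SimpleGraph.adjMatrix_pow_apply_eq_card_walk]
    have : 0 < Fintype.card {p : X.Walk w u | p.length = j} := by
      rw [Fintype.card_pos_iff]
      obtain ⟨q, hq⟩ := (hconn w u).exists_walk_length_eq_dist
      refine ⟨⟨q, ?_⟩⟩
      rw [Set.mem_setOf_eq, hq, SimpleGraph.dist_comm]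
      exact hj
    exact_mod_cast this
  -- vertices at every distance up to ε
  obtain ⟨wst, -, hwst⟩ : ∃ w ∈ Finset.univ, ε = X.dist u w :=
    Finset.exists_mem_eq_sup _ Finset.univ_nonempty _
  have hdists : ∀ j, j ≤ ε → ∃ w, X.dist u w = j := by
    intro j hj
    obtain ⟨P, hP⟩ := (hconn u wst).exists_walk_length_eq_dist
    obtain ⟨z, _, hz⟩ := myWalkIVT hconn u j P (by simp [SimpleGraph.dist_self]) (by rw [← hwst]; exact hj)
    exact ⟨z, hz⟩
  -- key step for a single coefficient
  have key : ∀ (w : V), w ≠ v → ∀ (j : ℕ), j ≤ ε → X.dist u w = j →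
      (∀ i, j < i → i ≤ ε → p.coeff i = 0) → p.coeff j = 0 := by
    intro w hwv j hjε hw hup
    have e0 : (0:ℝ) = ∑ i ∈ Finset.range (ε + 1), p.coeff i * (A ^ i) w u := by
      rw [← entry w, eVec, Pi.single_eq_of_ne hwv]
    rw [Finset.sum_eq_single j (fun i hi hij => ?_)
      (fun h => absurd (Finset.mem_range.mpr (by omega)) h)] at e0
    · rcases mul_eq_zero.mp e0.symm with h | h
      · exact h
      · exact absurd h (ne_of_gt (hpos j w hw))
    · rcases lt_or_gt_of_ne hij with h | h
      · rw [hzero i w (by omega), mul_zero]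
      · rw [hup i h (by have := Finset.mem_range.mp hi; omega), zero_mul]
  -- kill all coefficients above k
  have hckAux : ∀ m i, k < i → i ≤ ε → ε - i ≤ m → p.coeff i = 0 := by
    intro m
    induction m with
    | zero =>
      intro i h1 h2 h3
      obtain ⟨w, hw⟩ := hdists i h2
      have hwv : w ≠ v := by intro h; rw [h, ← hk] at hw; omega
      exact key w hwv i h2 hw (fun i' hi1 hi2 => absurd hi2 (by omega))
    | succ m ih =>
      intro i h1 h2 h3
      obtain ⟨w, hw⟩ := hdists i h2
      have hwv : w ≠ v := by intro h; rw [h, ← hk] at hw; omega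
      exact key w hwv i h2 hw (fun i' hi1 hi2 => ih i' (by omega) hi2 (by omega))
  have hck : ∀ i, k < i → i ≤ ε → p.coeff i = 0 := fun i h1 h2 =>
    hckAux (ε - i) i h1 h2 le_rfl
  -- coefficient k is nonzero
  have hkε : k < ε := hdist
  have hcknz : p.coeff k ≠ 0 := by
    have e1 : (1:ℝ) = ∑ i ∈ Finset.range (ε + 1), p.coeff i * (A ^ i) v u := by
      rw [← entry v, eVec, Pi.single_eq_same]
    rw [Finset.sum_eq_single k (fun i hi hik => ?_)
      (fun h => absurd (Finset.mem_range.mpr (by omega)) h)] at e1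
    · intro h
      rw [h, zero_mul] at e1
      exact one_ne_zero e1
    · rcases lt_or_gt_of_ne hik with h | h
      · rw [hzero i v (by omega), mul_zero]
      · rw [hck i h (by have := Finset.mem_range.mp hi; omega), zero_mul]
  -- uniqueness of the vertex at distance k
  have huniq : ∀ z, X.dist u z = k → z = v := by
    intro z hz
    by_contra hzv
    have e0 : (0:ℝ) = ∑ i ∈ Finset.range (ε + 1), p.coeff i * (A ^ i) z u := by
      rw [← entry z, eVec, Pi.single_eq_of_ne hzv]
    rw [Finset.sum_eq_single k (fun i hi hik => ?_)
      (fun h => absurd (Finset.mem_range.mpr (by omega)) h)] at e0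
    · exact absurd e0.symm (mul_ne_zero hcknz (ne_of_gt (hpos k z hz)))
    · rcases lt_or_gt_of_ne hik with h | h
      · rw [hzero i z (by omega), mul_zero]
      · rw [hck i h (by have := Finset.mem_range.mp hi; omega), zero_mul]
  -- final combinatorial contradiction
  have hwstv : wst ≠ v := by intro h; rw [h, ← hk] at hwst; omega
  obtain ⟨W⟩ := hcon.preconnected ⟨u, hne⟩ ⟨wst, hwstv⟩
  let f := (SimpleGraph.Embedding.induce (G := X) {w : V | w ≠ v}).toHom
  obtain ⟨z, hzsup, hz⟩ := myWalkIVT hconn u k (W.map f)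
    (by show X.dist u u ≤ k; simp [SimpleGraph.dist_self])
    (by show k ≤ X.dist u wst; rw [← hwst]; exact hkε.le)
  have hzv : z = v := huniq z hz
  rw [SimpleGraph.Walk.support_map] at hzsup
  obtain ⟨y, -, hy⟩ := List.mem_map.mp hzsup
  exact y.prop (hy.trans hzv)
end

section
/- Suppose X is a connected k-regular graph on n vertices of diameter d having exactly d+1 distinct adjacency eigenvalues θ_0 > θ_1 > ... > θ_d. Then for every pair of vertices u, v with d(u,v) = d one has (A^d)_{u,v} = (1/n) · Π_{s=1}^{d} (θ_0 − θ_s). -/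
open Matrix Finset Polynomial

variable {V : Type*}

variable [Fintype V] [DecidableEq V]

section Stmt13Aux

variable [Fintype V] [DecidableEq V] {X : SimpleGraph V} [DecidableRel X.Adj]
  {d : ℕ} {θ : Fin (d + 1) → ℝ} {E : Fin (d + 1) → Matrix V V ℝ}

private lemma sd_mul (h : SpectralDecomp X d θ E) (f g : Fin (d + 1) → ℝ) :
    (∑ r, f r • E r) * (∑ r, g r • E r) = ∑ r, (f r * g r) • E r := by
  rw [Finset.sum_mul]
  refine Finset.sum_congr rfl fun r _ => ?_
  rw [Finset.mul_sum]
  rw [Finset.sum_eq_single r (fun s _ hs => by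
      rw [Matrix.smul_mul, Matrix.mul_smul, h.orth, if_neg (Ne.symm hs), smul_zero, smul_zero])
    (by simp)]
  rw [Matrix.smul_mul, Matrix.mul_smul, h.orth, if_pos rfl, smul_smul]

private lemma sd_pow (h : SpectralDecomp X d θ E) (m : ℕ) :
    X.adjMatrix ℝ ^ m = ∑ r, (θ r ^ m) • E r := by
  induction m with
  | zero => simpa using h.sum_eq_one.symm
  | succ m ih =>
    rw [pow_succ, ih]
    conv_lhs => rw [h.decomp]
    rw [sd_mul h]
    exact Finset.sum_congr rfl fun r _ => by rw [pow_succ]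

private lemma sd_aeval (h : SpectralDecomp X d θ E) (P : Polynomial ℝ) :
    Polynomial.aeval (X.adjMatrix ℝ) P = ∑ r, (P.eval (θ r)) • E r := by
  induction P using Polynomial.induction_on' with
  | add p q hp hq =>
    rw [map_add, hp, hq, ← Finset.sum_add_distrib]
    exact Finset.sum_congr rfl fun r _ => by rw [Polynomial.eval_add, add_smul]
  | monomial m a =>
    rw [Polynomial.aeval_monomial, ← Algebra.smul_def, sd_pow h, Finset.smul_sum]
    exact Finset.sum_congr rfl fun r _ => by
      rw [smul_smul, Polynomial.eval_monomial]

private lemma sd_A_mul_E (h : SpectralDecomp X d θ E) (r : Fin (d + 1)) :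
    X.adjMatrix ℝ * E r = θ r • E r := by
  conv_lhs => rw [h.decomp]
  rw [Finset.sum_mul]
  rw [Finset.sum_eq_single r (fun s _ hs => by
      rw [Matrix.smul_mul, h.orth, if_neg hs, smul_zero]) (by simp)]
  rw [Matrix.smul_mul, h.orth, if_pos rfl]

private lemma sd_E_mul_A (h : SpectralDecomp X d θ E) (r : Fin (d + 1)) :
    E r * X.adjMatrix ℝ = θ r • E r := by
  conv_lhs => rw [h.decomp]
  rw [Finset.mul_sum]
  rw [Finset.sum_eq_single r (fun s _ hs => by
      rw [Matrix.mul_smul, h.orth, if_neg (Ne.symm hs), smul_zero]) (by simp)]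
  rw [Matrix.mul_smul, h.orth, if_pos rfl]

private lemma eig_const {k : ℕ} (hconn : X.Connected) (hreg : X.IsRegularOfDegree k)
    (x : V → ℝ) (hx : X.adjMatrix ℝ *ᵥ x = (k : ℝ) • x) (a b : V) : x a = x b := by
  haveI := hconn.nonempty
  obtain ⟨w₀, -, hmax⟩ := Finset.exists_max_image Finset.univ x Finset.univ_nonempty
  have key : ∀ c, x c = x w₀ → ∀ e, X.Adj c e → x e = x w₀ := by
    intro c hc e hce
    by_contra hne
    have hlt : x e < x w₀ := lt_of_le_of_ne (hmax e (Finset.mem_univ e)) hne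
    have h1 : (X.adjMatrix ℝ *ᵥ x) c = ∑ j ∈ X.neighborFinset c, x j := by simp
    have h2 : ∑ j ∈ X.neighborFinset c, x j < ∑ j ∈ X.neighborFinset c, x w₀ :=
      Finset.sum_lt_sum (fun j _ => hmax j (Finset.mem_univ j))
        ⟨e, by simp [hce], hlt⟩
    rw [hx] at h1
    have h3 : ∑ j ∈ X.neighborFinset c, x w₀ = (k : ℝ) * x w₀ := by
      rw [Finset.sum_const, nsmul_eq_mul]
      congr 1
      exact_mod_cast hreg c
    rw [h3] at h2
    have h4 : (k : ℝ) * x c = ∑ j ∈ X.neighborFinset c, x j := by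
      rw [← h1]; simp [smul_eq_mul]
    rw [hc] at h4
    rw [← h4] at h2
    exact lt_irrefl _ h2
  have hwalk : ∀ (c e : V) (p : X.Walk c e), x c = x w₀ → x e = x w₀ := by
    intro c e p
    induction p with
    | nil => exact id
    | cons hadj p ih => exact fun hc => ih (key _ hc _ hadj)
  have hall : ∀ c, x c = x w₀ := fun c => hwalk w₀ c ((hconn.preconnected w₀ c).some) rfl
  rw [hall a, hall b]

private lemma sd_theta0 {k : ℕ} (h : SpectralDecomp X d θ E) (hconn : X.Connected)
    (hreg : X.IsRegularOfDegree k) : θ 0 = k := by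
  haveI := hconn.nonempty
  have hA1 : X.adjMatrix ℝ *ᵥ (fun _ => (1 : ℝ)) = (k : ℝ) • (fun _ => (1 : ℝ)) := by
    funext w
    simp only [SimpleGraph.adjMatrix_mulVec_apply, Finset.sum_const, nsmul_eq_mul, mul_one,
      Pi.smul_apply, smul_eq_mul]
    exact_mod_cast hreg w
  -- some θ r equals k
  have hsum : ∑ r, E r *ᵥ (fun _ => (1 : ℝ)) = fun _ => (1 : ℝ) := by
    funext w
    rw [Finset.sum_apply]
    simp only [Matrix.mulVec, dotProduct, mul_one]
    rw [Finset.sum_comm]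
    have hone : ∀ j, ∑ r, E r w j = (1 : Matrix V V ℝ) w j := fun j => by
      rw [← h.sum_eq_one]; simp [Matrix.sum_apply]
    simp only [hone, Matrix.one_apply]
    simp
  have hex : ∃ r, E r *ᵥ (fun _ => (1 : ℝ)) ≠ 0 := by
    by_contra hc
    push_neg at hc
    have h0 : (fun _ => (1 : ℝ)) = (0 : V → ℝ) := by
      rw [← hsum]; exact Finset.sum_eq_zero fun r _ => hc r
    exact one_ne_zero (congrFun h0 (Classical.arbitrary V))
  obtain ⟨r, hr⟩ := hex
  have h1 : E r *ᵥ (X.adjMatrix ℝ *ᵥ (fun _ => (1 : ℝ)))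
      = θ r • (E r *ᵥ (fun _ => (1 : ℝ))) := by
    rw [Matrix.mulVec_mulVec, sd_E_mul_A h, Matrix.smul_mulVec]
  rw [hA1, Matrix.mulVec_smul] at h1
  have hrk : θ r = (k : ℝ) := by
    have h2 : ((k : ℝ) - θ r) • (E r *ᵥ (fun _ => (1 : ℝ))) = 0 := by
      rw [sub_smul, h1, sub_self]
    rcases smul_eq_zero.mp h2 with h3 | h3
    · linarith [sub_eq_zero.mp h3]
    · exact absurd h3 hr
  -- θ 0 ≤ k
  have hb : θ 0 ≤ (k : ℝ) := by
    have hex0 : ∃ a b, E 0 a b ≠ 0 := by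
      by_contra hc
      push_neg at hc
      exact h.proj_ne_zero 0 (by ext a b; exact hc a b)
    obtain ⟨a, b, hab⟩ := hex0
    set x : V → ℝ := fun i => E 0 i b with hxdef
    have hAx : X.adjMatrix ℝ *ᵥ x = θ 0 • x := by
      funext i
      have h4 := congrFun (congrFun (sd_A_mul_E h 0) i) b
      simpa [Matrix.mul_apply, Matrix.mulVec, dotProduct, hxdef] using h4
    obtain ⟨i, -, hi⟩ := Finset.exists_max_image Finset.univ (fun j => |x j|)
      Finset.univ_nonempty
    have hxi : 0 < |x i| := by
      have : |x a| ≤ |x i| := hi a (Finset.mem_univ a)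
      have : 0 < |x a| := abs_pos.mpr hab
      linarith [hi a (Finset.mem_univ a)]
    have hineq : |θ 0| * |x i| ≤ (k : ℝ) * |x i| := by
      have h5 : (X.adjMatrix ℝ *ᵥ x) i = ∑ j ∈ X.neighborFinset i, x j := by simp
      calc |θ 0| * |x i| = |θ 0 * x i| := (abs_mul _ _).symm
        _ = |∑ j ∈ X.neighborFinset i, x j| := by
            rw [← h5, hAx]; simp [smul_eq_mul]
        _ ≤ ∑ j ∈ X.neighborFinset i, |x j| := Finset.abs_sum_le_sum_abs _ _
        _ ≤ ∑ j ∈ X.neighborFinset i, |x i| :=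
            Finset.sum_le_sum fun j _ => hi j (Finset.mem_univ j)
        _ = (k : ℝ) * |x i| := by
            rw [Finset.sum_const, nsmul_eq_mul]
            congr 1
            exact_mod_cast hreg i
    have h6 : |θ 0| ≤ (k : ℝ) := le_of_mul_le_mul_right hineq hxi
    exact le_trans (le_abs_self _) h6
  rcases eq_or_ne r 0 with rfl | hr0
  · exact hrk
  · exfalso
    have := h.strict_anti 0 r (Fin.pos_iff_ne_zero.mpr hr0)
    linarith
  
private lemma sd_E0_entry {n k : ℕ} (h : SpectralDecomp X d θ E) (hconn : X.Connected)
    (hreg : X.IsRegularOfDegree k) (hn : Fintype.card V = n) (a b : V) :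
    E 0 a b = 1 / (n : ℝ) := by
  haveI := hconn.nonempty
  have hθ : θ 0 = (k : ℝ) := sd_theta0 h hconn hreg
  have hcol : ∀ (c i j : V), E 0 i c = E 0 j c := by
    intro c i j
    have hAx : X.adjMatrix ℝ *ᵥ (fun i => E 0 i c) = (k : ℝ) • (fun i => E 0 i c) := by
      funext w
      have h4 := congrFun (congrFun (sd_A_mul_E h 0) w) c
      rw [hθ] at h4
      simpa [Matrix.mul_apply, Matrix.mulVec, dotProduct] using h4
    exact eig_const hconn hreg _ hAx i j
  have hall : ∀ i j, E 0 i j = E 0 a b := by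
    intro i j
    calc E 0 i j = E 0 b j := hcol j i b
      _ = E 0 j b := by
          have := congrFun (congrFun (h.symm 0) b) j
          simpa [Matrix.transpose_apply] using this.symm
      _ = E 0 a b := hcol b j a
  have hn0 : (n : ℝ) ≠ 0 := by
    have hc : 0 < Fintype.card V := Fintype.card_pos
    rw [hn] at hc
    exact Nat.cast_ne_zero.mpr (by omega)
  have hα0 : E 0 a b ≠ 0 := by
    intro h0
    exact h.proj_ne_zero 0 (by ext i j; rw [hall i j, h0]; rfl)
  have hsq : (n : ℝ) * E 0 a b * E 0 a b = E 0 a b := by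
    have h5 := congrFun (congrFun (h.orth 0 0) a) b
    rw [if_pos rfl, Matrix.mul_apply] at h5
    calc (n : ℝ) * E 0 a b * E 0 a b
        = ∑ _c : V, E 0 a b * E 0 a b := by
          rw [Finset.sum_const, Finset.card_univ, hn, nsmul_eq_mul]; ring
      _ = ∑ c : V, E 0 a c * E 0 c b := Finset.sum_congr rfl fun c _ => by
          rw [hall a c, hall c b]
      _ = E 0 a b := h5
  have h7 : (n : ℝ) * E 0 a b = 1 := by
    have h8 : (n : ℝ) * E 0 a b * E 0 a b = 1 * E 0 a b := by rw [hsq, one_mul]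
    exact mul_right_cancel₀ hα0 h8
  rw [eq_div_iff hn0]
  linarith

end Stmt13Aux

/-- In a connected `k`-regular graph on `n` vertices of diameter `d` with
exactly `d+1` distinct eigenvalues `θ_0 > ... > θ_d`, every pair `u, v` at distance `d`
satisfies `(A^d)_uv = (1/n) ∏_{s=1}^{d} (θ_0 - θ_s)`. -/
theorem stmt_13 (X : SimpleGraph V) [DecidableRel X.Adj] (hconn : X.Connected)
    (n k d : ℕ) (hn : Fintype.card V = n) (hreg : X.IsRegularOfDegree k)
    (hdiam : ∀ w z : V, X.dist w z ≤ d) (hdiam' : ∃ w z : V, X.dist w z = d)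
    (θ : Fin (d + 1) → ℝ) (E : Fin (d + 1) → Matrix V V ℝ)
    (hspec : SpectralDecomp X d θ E) (u v : V) (huv : X.dist u v = d) :
    ((X.adjMatrix ℝ) ^ d) u v =
      (1 / (n : ℝ)) * ∏ s ∈ Finset.Ioi (0 : Fin (d + 1)), (θ 0 - θ s) := by
  haveI := hconn.nonempty
  set A := X.adjMatrix ℝ with hA
  set P : Polynomial ℝ := ∏ s ∈ Finset.Ioi (0 : Fin (d + 1)), (Polynomial.X - Polynomial.C (θ s))
    with hP
  have hPdeg : P.natDegree = d := by
    rw [hP, Polynomial.natDegree_prod _ _ (fun i _ => Polynomial.X_sub_C_ne_zero _)]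
    simp [Polynomial.natDegree_X_sub_C, Fin.card_Ioi]
  have hPmonic : P.Monic :=
    Polynomial.monic_prod_of_monic _ _ fun i _ => Polynomial.monic_X_sub_C _
  have h1 : Polynomial.aeval A P
      = (∏ s ∈ Finset.Ioi (0 : Fin (d + 1)), (θ 0 - θ s)) • E 0 := by
    rw [sd_aeval hspec P]
    rw [Finset.sum_eq_single (0 : Fin (d + 1)) (fun r _ hr => by
        have hz : P.eval (θ r) = 0 := by
          rw [hP, Polynomial.eval_prod]
          exact Finset.prod_eq_zero (Finset.mem_Ioi.mpr (Fin.pos_iff_ne_zero.mpr hr)) (by simp)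
        rw [hz, zero_smul]) (by simp)]
    congr 1
    rw [hP, Polynomial.eval_prod]
    exact Finset.prod_congr rfl fun s _ => by simp
  have h2 : (Polynomial.aeval A P) u v = (A ^ d) u v := by
    rw [Polynomial.aeval_eq_sum_range, hPdeg, Matrix.sum_apply]
    rw [Finset.sum_eq_single d (fun i hi hid => ?_) (by simp)]
    · rw [Matrix.smul_apply, ← hPdeg, hPmonic.coeff_natDegree, one_smul]
    · have hilt : i < d := by
        rcases Finset.mem_range.mp hi with h'
        omega
      have hAi : (A ^ i) u v = 0 := by
        rw [hA, SimpleGraph.adjMatrix_pow_apply_eq_card_walk]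
        have : Fintype.card {p : X.Walk u v | p.length = i} = 0 := by
          rw [Fintype.card_eq_zero_iff]
          constructor
          rintro ⟨p, hp⟩
          have hle : X.dist u v ≤ p.length := SimpleGraph.dist_le p
          rw [huv] at hle
          have hpl : p.length = i := hp
          omega
        rw [this]
        norm_num
      rw [Matrix.smul_apply, hAi, smul_zero]
  have hE0 : E 0 u v = 1 / (n : ℝ) := sd_E0_entry hspec hconn hreg hn u v
  calc (A ^ d) u v = (Polynomial.aeval A P) u v := h2.symm
    _ = ((∏ s ∈ Finset.Ioi (0 : Fin (d + 1)), (θ 0 - θ s)) • E 0) u v := by rw [h1]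
    _ = (∏ s ∈ Finset.Ioi (0 : Fin (d + 1)), (θ 0 - θ s)) * E 0 u v := by
        rw [Matrix.smul_apply, smul_eq_mul]
    _ = 1 / (n : ℝ) * ∏ s ∈ Finset.Ioi (0 : Fin (d + 1)), (θ 0 - θ s) := by
        rw [hE0]; ring
end

section
/- Suppose X has diameter d and exactly d+1 distinct adjacency eigenvalues θ_0 > ... > θ_d, and suppose X admits perfect state transfer at time τ between vertices u and v with d(u,v) = d. Then for every pair of vertices z, w with d(z,w) = d one has (A^d)_{z,w} ≤ (A^d)_{u,v}, and equality holds if and only if X admits perfect state transfer between z and w at time τ. -/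
open Matrix Finset Polynomial

variable {V : Type*}

variable [Fintype V] [DecidableEq V]


section AuxStmt17

private lemma aux_pow_decomp {n : Type*} [Fintype n] [DecidableEq n] {R : Type*} [CommRing R]
    {ι : Type*} [Fintype ι] [DecidableEq ι] (A : Matrix n n R) (μ : ι → R)
    (P : ι → Matrix n n R)
    (hA : A = ∑ r, μ r • P r) (h1 : ∑ r, P r = 1)
    (horth : ∀ r s, P r * P s = if r = s then P r else 0) (k : ℕ) :
    A ^ k = ∑ r, μ r ^ k • P r := by
  induction k with
  | zero => simp [h1]
  | succ k ih =>
    rw [pow_succ, ih, hA, Finset.sum_mul_sum]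
    refine Finset.sum_congr rfl fun r _ => ?_
    rw [Finset.sum_eq_single r]
    · rw [Matrix.smul_mul, Matrix.mul_smul, horth, if_pos rfl, smul_smul, pow_succ]
    · intro s _ hs
      rw [Matrix.smul_mul, Matrix.mul_smul, horth, if_neg (Ne.symm hs), smul_zero, smul_zero]
    · intro h; exact absurd (Finset.mem_univ r) h

end AuxStmt17

/-- Suppose `X` has diameter `d`, exactly `d+1` distinct eigenvalues, and
admits perfect state transfer at time `τ` between `u` and `v` at distance `d`. Then for all
`z, w` at distance `d`, `(A^d)_zw ≤ (A^d)_uv`, with equality iff `X` admits perfect state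
transfer between `z` and `w` at time `τ`. -/
theorem stmt_17 (X : SimpleGraph V) [DecidableRel X.Adj] (hconn : X.Connected)
    (d : ℕ) (hdiam : ∀ w z : V, X.dist w z ≤ d) (hdiam' : ∃ w z : V, X.dist w z = d)
    (θ : Fin (d + 1) → ℝ) (E : Fin (d + 1) → Matrix V V ℝ)
    (hspec : SpectralDecomp X d θ E)
    (u v : V) (huv : X.dist u v = d) (τ : ℝ) (hτ : 0 < τ) (hpst : PST X u v τ) :
    ∀ z w : V, X.dist z w = d →
      ((X.adjMatrix ℝ) ^ d) z w ≤ ((X.adjMatrix ℝ) ^ d) u v ∧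
        (((X.adjMatrix ℝ) ^ d) z w = ((X.adjMatrix ℝ) ^ d) u v ↔ PST X z w τ) := by
  obtain ⟨hdec, hone, horth, hsymm, hanti, -⟩ := hspec
  have hpowR : ∀ k : ℕ, X.adjMatrix ℝ ^ k = ∑ r, θ r ^ k • E r :=
    aux_pow_decomp _ _ _ hdec hone horth
  -- Vandermonde matrix
  set W : Matrix (Fin (d + 1)) (Fin (d + 1)) ℝ := (Matrix.vandermonde θ)ᵀ with hW
  have hdet : IsUnit W.det := by
    rw [hW, Matrix.det_transpose, Matrix.det_vandermonde]
    refine isUnit_iff_ne_zero.mpr (Finset.prod_ne_zero_iff.mpr fun i _ =>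
      Finset.prod_ne_zero_iff.mpr fun j hj => ?_)
    exact sub_ne_zero.mpr (ne_of_lt (hanti i j (Finset.mem_Ioi.mp hj)))
  set e0 : Fin (d + 1) → ℝ := Pi.single (Fin.last d) 1 with he0
  set c : Fin (d + 1) → ℝ := W⁻¹ *ᵥ e0 with hc
  -- entries of powers below the distance vanish
  have hzero : ∀ (z w : V) (k : ℕ), k < X.dist z w → (X.adjMatrix ℝ ^ k) z w = 0 := by
    intro z w k hk
    rw [SimpleGraph.adjMatrix_pow_apply_eq_card_walk]
    norm_cast
    refine Fintype.card_eq_zero_iff.mpr ⟨fun p => ?_⟩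
    obtain ⟨q, hq⟩ := p
    have := SimpleGraph.dist_le q
    simp only [Set.mem_setOf_eq] at hq
    omega
  -- positivity at the distance
  have hpos : ∀ z w : V, X.dist z w = d → (1 : ℝ) ≤ (X.adjMatrix ℝ ^ d) z w := by
    intro z w hzw
    obtain ⟨p, hp⟩ := hconn.exists_walk_length_eq_dist z w
    rw [SimpleGraph.adjMatrix_pow_apply_eq_card_walk]
    have : 0 < Fintype.card {q : X.Walk z w // q.length = d} :=
      Fintype.card_pos_iff.mpr ⟨⟨p, by rw [hp, hzw]⟩⟩
    exact_mod_cast this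
  -- key proportionality
  have hkey : ∀ z w : V, X.dist z w = d → ∀ r, E r z w = (X.adjMatrix ℝ ^ d) z w * c r := by
    intro z w hzw
    set x : Fin (d + 1) → ℝ := fun r => E r z w with hx
    have hWx : W *ᵥ x = ((X.adjMatrix ℝ ^ d) z w) • e0 := by
      funext k
      have h1 : (W *ᵥ x) k = ∑ r, θ r ^ (k : ℕ) * E r z w := by
        simp [hW, Matrix.mulVec, dotProduct, Matrix.vandermonde_apply, hx]
      have h2 : (X.adjMatrix ℝ ^ (k : ℕ)) z w = ∑ r, θ r ^ (k : ℕ) * E r z w := by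
        rw [hpowR]; simp [Matrix.sum_apply]
      rw [h1, ← h2]
      by_cases hk : k = Fin.last d
      · subst hk
        simp [he0, Fin.val_last, Pi.single_eq_same]
      · have hklt : (k : ℕ) < d := Fin.val_lt_last hk
        rw [hzero z w _ (by omega)]
        simp [he0, Pi.single_eq_of_ne hk]
    have hxc : x = ((X.adjMatrix ℝ ^ d) z w) • c := by
      calc x = (W⁻¹ * W) *ᵥ x := by rw [Matrix.nonsing_inv_mul W hdet, Matrix.one_mulVec]
        _ = W⁻¹ *ᵥ (W *ᵥ x) := by rw [← Matrix.mulVec_mulVec]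
        _ = W⁻¹ *ᵥ (((X.adjMatrix ℝ ^ d) z w) • e0) := by rw [hWx]
        _ = ((X.adjMatrix ℝ ^ d) z w) • c := by rw [Matrix.mulVec_smul, hc]
    intro r
    have := congrFun hxc r
    simpa [hx, smul_eq_mul] using this
  -- complex side
  set Ec : Fin (d + 1) → Matrix V V ℂ := fun r => (E r).map Complex.ofReal with hEc
  have hEcapp : ∀ r a b, Ec r a b = ((E r a b : ℝ) : ℂ) := fun r a b => rfl
  set M : Matrix V V ℂ := (Complex.I * (τ : ℂ)) • X.adjMatrix ℂ with hM
  have hdecC : M = ∑ r, (Complex.I * (τ : ℂ) * (θ r : ℂ)) • Ec r := by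
    ext a b
    have h1 := congrFun (congrFun hdec a) b
    simp only [Matrix.sum_apply, Matrix.smul_apply, smul_eq_mul] at h1
    have h2 : (X.adjMatrix ℂ) a b = ((X.adjMatrix ℝ a b : ℝ) : ℂ) := by
      by_cases h : X.Adj a b <;> simp [h]
    simp only [hM, Matrix.smul_apply, Matrix.sum_apply, smul_eq_mul, h2, h1, hEcapp]
    push_cast
    rw [Finset.mul_sum]
    exact Finset.sum_congr rfl fun r _ => by ring
  have honeC : ∑ r, Ec r = 1 := by
    ext a b
    have h1 := congrFun (congrFun hone a) b
    simp only [Matrix.sum_apply] at h1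
    simp only [Matrix.sum_apply, hEcapp]
    rw [← Complex.ofReal_sum, h1]
    simp [Matrix.one_apply, apply_ite]
  have horthC : ∀ r s, Ec r * Ec s = if r = s then Ec r else 0 := by
    intro r s
    have h1 := horth r s
    ext a b
    have h2 := congrFun (congrFun h1 a) b
    simp only [Matrix.mul_apply] at h2
    simp only [Matrix.mul_apply, hEcapp]
    calc ∑ k, ((E r a k : ℝ) : ℂ) * ((E s k b : ℝ) : ℂ)
        = ((∑ k, E r a k * E s k b : ℝ) : ℂ) := by push_cast; rfl
      _ = _ := by rw [h2]; split_ifs with h <;> simp [hEcapp]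
  have hpowC : ∀ k : ℕ, M ^ k = ∑ r, (Complex.I * (τ : ℂ) * (θ r : ℂ)) ^ k • Ec r :=
    aux_pow_decomp _ _ _ hdecC honeC horthC
  have hexp : NormedSpace.exp M
      = ∑ r, Complex.exp (Complex.I * (τ : ℂ) * (θ r : ℂ)) • Ec r := by
    have h1 : ∀ r : Fin (d + 1),
        HasSum (fun k : ℕ => ((k.factorial⁻¹ : ℂ) * (Complex.I * (τ : ℂ) * (θ r : ℂ)) ^ k)
          • Ec r)
          (Complex.exp (Complex.I * (τ : ℂ) * (θ r : ℂ)) • Ec r) := by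
      intro r
      have h2 : HasSum (fun k : ℕ => (k.factorial⁻¹ : ℂ) • (Complex.I * (τ : ℂ) * (θ r : ℂ)) ^ k)
          (NormedSpace.exp (Complex.I * (τ : ℂ) * (θ r : ℂ))) :=
        NormedSpace.exp_series_hasSum_exp' _
      rw [← Complex.exp_eq_exp_ℂ] at h2
      simpa [smul_eq_mul] using h2.smul_const (Ec r)
    have h3 := hasSum_sum (s := (Finset.univ : Finset (Fin (d + 1))))
      (f := fun (r : Fin (d + 1)) (k : ℕ) =>
        ((k.factorial⁻¹ : ℂ) * (Complex.I * (τ : ℂ) * (θ r : ℂ)) ^ k) • Ec r)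
      (a := fun r => Complex.exp (Complex.I * (τ : ℂ) * (θ r : ℂ)) • Ec r)
      (fun r _ => h1 r)
    have hfun : (fun k : ℕ => (k.factorial⁻¹ : ℂ) • M ^ k)
        = fun k => ∑ r, ((k.factorial⁻¹ : ℂ) * (Complex.I * (τ : ℂ) * (θ r : ℂ)) ^ k)
          • Ec r := by
      funext k
      rw [hpowC k, Finset.smul_sum]
      exact Finset.sum_congr rfl fun r _ => by rw [smul_smul]
    rw [NormedSpace.exp_eq_tsum ℂ]
    rw [show (fun x : Matrix V V ℂ => ∑' n : ℕ, (n.factorial⁻¹ : ℂ) • x ^ n) M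
      = ∑' n : ℕ, (n.factorial⁻¹ : ℂ) • M ^ n from rfl, hfun]
    exact h3.tsum_eq
  have hentry : ∀ a b : V, NormedSpace.exp M a b
      = ∑ r, Complex.exp (Complex.I * (τ : ℂ) * (θ r : ℂ)) * ((E r a b : ℝ) : ℂ) := by
    intro a b
    rw [hexp]
    simp [Matrix.sum_apply, hEcapp]
  have habs : ∀ r, ‖Complex.exp (Complex.I * (τ : ℂ) * (θ r : ℂ))‖ = 1 := by
    intro r
    have h : Complex.I * (τ : ℂ) * (θ r : ℂ) = ((τ * θ r : ℝ) : ℂ) * Complex.I := by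
      push_cast; ring
    rw [h, Complex.norm_exp_ofReal_mul_I]
  have hphase : ∀ r, Complex.exp (Complex.I * (τ : ℂ) * (θ r : ℂ)) *
      (starRingEnd ℂ) (Complex.exp (Complex.I * (τ : ℂ) * (θ r : ℂ))) = 1 := by
    intro r
    rw [Complex.mul_conj, Complex.normSq_eq_norm_sq, habs]
    norm_num
  -- rows of exp M have norm 1
  have hrow : ∀ a : V, ∑ b, NormedSpace.exp M a b *
      (starRingEnd ℂ) (NormedSpace.exp M a b) = 1 := by
    intro a
    have hconj : ∀ b, (starRingEnd ℂ) (NormedSpace.exp M a b)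
        = ∑ s, (starRingEnd ℂ) (Complex.exp (Complex.I * (τ : ℂ) * (θ s : ℂ)))
          * ((E s a b : ℝ) : ℂ) := by
      intro b
      rw [hentry, map_sum]
      exact Finset.sum_congr rfl fun s _ => by rw [_root_.map_mul, Complex.conj_ofReal]
    calc ∑ b, NormedSpace.exp M a b * (starRingEnd ℂ) (NormedSpace.exp M a b)
        = ∑ b, ∑ r, ∑ s, (Complex.exp (Complex.I * (τ : ℂ) * (θ r : ℂ))
            * (starRingEnd ℂ) (Complex.exp (Complex.I * (τ : ℂ) * (θ s : ℂ))))
            * ((E r a b * E s a b : ℝ) : ℂ) := by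
          refine Finset.sum_congr rfl fun b _ => ?_
          rw [hconj, hentry, Finset.sum_mul_sum]
          refine Finset.sum_congr rfl fun r _ => Finset.sum_congr rfl fun s _ => ?_
          push_cast; ring
      _ = ∑ r, ∑ s, (Complex.exp (Complex.I * (τ : ℂ) * (θ r : ℂ))
            * (starRingEnd ℂ) (Complex.exp (Complex.I * (τ : ℂ) * (θ s : ℂ))))
            * (((E r * E s) a a : ℝ) : ℂ) := by
          rw [Finset.sum_comm]
          refine Finset.sum_congr rfl fun r _ => ?_
          rw [Finset.sum_comm]
          refine Finset.sum_congr rfl fun s _ => ?_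
          rw [← Finset.mul_sum]
          congr 1
          rw [← Complex.ofReal_sum]
          congr 1
          rw [Matrix.mul_apply]
          refine Finset.sum_congr rfl fun b _ => ?_
          congr 1
          conv_lhs => rw [← hsymm s]
          exact Matrix.transpose_apply _ _ _
      _ = ∑ r, ((E r a a : ℝ) : ℂ) := by
          refine Finset.sum_congr rfl fun r _ => ?_
          rw [Finset.sum_eq_single r]
          · rw [horth, if_pos rfl, hphase, one_mul]
          · intro s _ hs
            rw [horth, if_neg (Ne.symm hs)]
            simp
          · intro h; exact absurd (Finset.mem_univ r) h
      _ = 1 := by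
          rw [← Complex.ofReal_sum]
          have h1 := congrFun (congrFun hone a) a
          simp only [Matrix.sum_apply] at h1
          rw [h1, Matrix.one_apply_eq]
          norm_num
  have hbound : ∀ a b : V, ‖NormedSpace.exp M a b‖ ≤ 1 := by
    intro a b
    have h2 : ∑ x, Complex.normSq (NormedSpace.exp M a x) = 1 := by
      have h3 := hrow a
      have h4 : ∀ x : V, NormedSpace.exp M a x * (starRingEnd ℂ) (NormedSpace.exp M a x)
          = ((Complex.normSq (NormedSpace.exp M a x) : ℝ) : ℂ) := fun x => Complex.mul_conj _
      rw [Finset.sum_congr rfl fun x _ => h4 x, ← Complex.ofReal_sum] at h3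
      exact_mod_cast h3
    have h5 : Complex.normSq (NormedSpace.exp M a b) ≤ 1 := by
      rw [← h2]
      exact Finset.single_le_sum (fun x _ => Complex.normSq_nonneg _) (Finset.mem_univ b)
    have h6 := Complex.sq_norm (NormedSpace.exp M a b)
    nlinarith [norm_nonneg (NormedSpace.exp M a b)]
  -- the common phase factor
  set S : ℂ := ∑ r, Complex.exp (Complex.I * (τ : ℂ) * (θ r : ℂ)) * ((c r : ℝ) : ℂ) with hS
  have hform : ∀ z w : V, X.dist z w = d →
      NormedSpace.exp M w z = (((X.adjMatrix ℝ ^ d) z w : ℝ) : ℂ) * S := by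
    intro z w hzw
    rw [hentry, hS, Finset.mul_sum]
    refine Finset.sum_congr rfl fun r _ => ?_
    have hE : E r w z = (X.adjMatrix ℝ ^ d) z w * c r := by
      have h1 : E r w z = E r z w := by
        conv_lhs => rw [← hsymm r]
        exact Matrix.transpose_apply _ _ _
      rw [h1, hkey z w hzw r]
    rw [hE]
    push_cast
    ring
  have habsform : ∀ z w : V, X.dist z w = d →
      ‖NormedSpace.exp M w z‖ = (X.adjMatrix ℝ ^ d) z w * ‖S‖ := by
    intro z w hzw
    rw [hform z w hzw, norm_mul, Complex.norm_real, Real.norm_eq_abs,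
      abs_of_nonneg (le_trans zero_le_one (hpos z w hzw))]
  have hpst' : ‖NormedSpace.exp M v u‖ = 1 := hpst
  have hαS : (X.adjMatrix ℝ ^ d) u v * ‖S‖ = 1 := by
    rw [← habsform u v huv]
    exact hpst'
  have hSpos : 0 < ‖S‖ := by
    rcases (norm_nonneg S).lt_or_eq with h | h
    · exact h
    · exfalso; rw [← h] at hαS; simp at hαS
  intro z w hzw
  have hβle : (X.adjMatrix ℝ ^ d) z w * ‖S‖ ≤ (X.adjMatrix ℝ ^ d) u v * ‖S‖ := by
    rw [hαS, ← habsform z w hzw]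
    exact hbound w z
  refine ⟨le_of_mul_le_mul_right hβle hSpos, ?_, ?_⟩
  · intro heq
    show ‖NormedSpace.exp M w z‖ = 1
    rw [habsform z w hzw, heq, hαS]
  · intro hp
    have hp' : ‖NormedSpace.exp M w z‖ = 1 := hp
    rw [habsform z w hzw, ← hαS] at hp'
    exact mul_right_cancel₀ (ne_of_gt hSpos) hp'
end
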